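/- Define recursively, for n, i ∈ ℕ, lists b(n,i) of natural numbers of length 2ⁿ by b(0,i) = [i] and b(n+1,i) = b(n, ⌊i/2⌋ + 1) ++ b(n, ⌊i/2⌋) (list concatenation). Then for every n ∈ ℕ and every i ≥ 1: the last entry of b(n,i) equals ⌊i/2ⁿ⌋, the first entry of b(n,i) equals 1 + ⌈(i−1)/2ⁿ⌉, and every entry of b(n,i) lies between these two values, i.e. ⌊i/2ⁿ⌋ ≤ (ℓ-th entry of b(n,i)) ≤ 1 + ⌈(i−1)/2ⁿ⌉ for all 0 ≤ ℓ < 2ⁿ. -/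

import Mathlib

def bvec : ℕ → ℕ → List ℕ
  | 0, i => [i]
  | n + 1, i => bvec n (i / 2 + 1) ++ bvec n (i / 2)

lemma bvec_length (n i : ℕ) : (bvec n i).length = 2 ^ n := by
  induction n generalizing i with
  | zero => simp [bvec]
  | succ n ih => simp [bvec, ih, pow_succ]; ring

lemma bvec_ne_nil (n i : ℕ) : bvec n i ≠ [] := by
  intro h
  have h2 := bvec_length n i
  rw [h] at h2
  have : (0:ℕ) < 2 ^ n := Nat.pow_pos (by norm_num)
  simp at h2
  omega

lemma headD_append {α} (l1 l2 : List α) (d : α) (h : l1 ≠ []) :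
    (l1 ++ l2).headD d = l1.headD d := by cases l1 <;> simp_all

lemma getLastD_append' {α} (l1 l2 : List α) (d : α) (h : l2 ≠ []) :
    (l1 ++ l2).getLastD d = l2.getLastD d := by
  rw [List.getLastD_eq_getLast?, List.getLastD_eq_getLast?, List.getLast?_append,
    Option.or_of_isSome]
  cases l2 with
  | nil => simp at h
  | cons a t => simp [List.getLast?_isSome]

lemma bvec_main (n i : ℕ) :
    (bvec n i).getLastD 0 = i / 2 ^ n ∧
    (bvec n i).headD 0 = (i + 2 * 2 ^ n - 2) / 2 ^ n ∧
    ∀ ℓ < 2 ^ n,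
      i / 2 ^ n ≤ (bvec n i).getD ℓ 0 ∧
      (bvec n i).getD ℓ 0 ≤ (i + 2 * 2 ^ n - 2) / 2 ^ n := by
  induction n generalizing i with
  | zero =>
    refine ⟨by simp [bvec], by simp [bvec], ?_⟩
    intro ℓ hℓ
    interval_cases ℓ
    simp [bvec]
  | succ n ih =>
    have hk : (0:ℕ) < 2 ^ n := Nat.pow_pos (by norm_num)
    have h2 : (2:ℕ) ^ (n + 1) = 2 * 2 ^ n := by rw [pow_succ]; ring
    have hA : i / 2 ^ (n + 1) = (i / 2) / 2 ^ n := by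
      rw [Nat.div_div_eq_div_mul, h2, Nat.mul_comm]
    have hB : (i + 2 * 2 ^ (n + 1) - 2) / 2 ^ (n + 1)
        = (i / 2 + 1 + 2 * 2 ^ n - 2) / 2 ^ n := by
      rw [h2, show i + 2 * (2 * 2 ^ n) - 2 = i + 2 * (2 * 2 ^ n - 1) by omega,
        ← Nat.div_div_eq_div_mul, Nat.add_mul_div_left _ _ (by norm_num : (0:ℕ) < 2),
        show i / 2 + (2 * 2 ^ n - 1) = i / 2 + 1 + 2 * 2 ^ n - 2 by omega]
    show (bvec n (i/2+1) ++ bvec n (i/2)).getLastD 0 = _ ∧ _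
    refine ⟨?_, ?_, ?_⟩
    · rw [getLastD_append' _ _ _ (bvec_ne_nil _ _), (ih (i/2)).1, hA]
    · rw [show bvec (n+1) i = bvec n (i/2+1) ++ bvec n (i/2) from rfl,
        headD_append _ _ _ (bvec_ne_nil _ _), (ih (i/2+1)).2.1, hB]
    · intro ℓ hℓ
      rw [show bvec (n+1) i = bvec n (i/2+1) ++ bvec n (i/2) from rfl]
      by_cases hc : ℓ < 2 ^ n
      · rw [List.getD_append _ _ _ _ (by rw [bvec_length]; exact hc)]
        obtain ⟨hlo, hhi⟩ := (ih (i/2+1)).2.2 ℓ hc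
        refine ⟨?_, ?_⟩
        · calc i / 2 ^ (n+1) = (i/2) / 2^n := hA
            _ ≤ (i/2+1) / 2^n := Nat.div_le_div_right (Nat.le_succ _)
            _ ≤ _ := hlo
        · rw [hB]; exact hhi
      · rw [List.getD_append_right _ _ _ _ (by rw [bvec_length]; omega)]
        rw [bvec_length]
        obtain ⟨hlo, hhi⟩ := (ih (i/2)).2.2 (ℓ - 2^n) (by rw [h2] at hℓ; omega)
        refine ⟨?_, ?_⟩
        · rw [hA]; exact hlo
        · rw [hB]
          exact hhi.trans (Nat.div_le_div_right (by omega))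

lemma ceil_eq (k m : ℕ) (hk : 0 < k) :
    (((m + k - 1) / k : ℕ) : ℤ) = ⌈((m : ℚ)) / ((k : ℚ))⌉ := by
  set q := (m + k - 1) / k with hq
  obtain ⟨r, hr, hqr⟩ : ∃ r, r < k ∧ k * q + r = m + k - 1 :=
    ⟨(m + k - 1) % k, Nat.mod_lt _ hk, by rw [hq, Nat.div_add_mod]⟩
  have h1 : m ≤ k * q := by omega
  have h2 : k * q < m + k := by omega
  have hkq : (0:ℚ) < (k:ℚ) := by positivity
  symm
  rw [Int.ceil_eq_iff]
  constructor
  · rw [lt_div_iff₀ hkq]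
    push_cast
    have := (Nat.cast_lt (α := ℚ)).2 h2
    push_cast at this
    nlinarith
  · rw [div_le_iff₀ hkq]
    push_cast
    have := (Nat.cast_le (α := ℚ)).2 h1
    push_cast at this
    nlinarith

theorem stmt_2 (n i : ℕ) (hi : 1 ≤ i) :
    (bvec n i).getLastD 0 = i / 2 ^ n ∧
    ((bvec n i).headD 0 : ℤ) = 1 + ⌈((i : ℚ) - 1) / ((2 : ℚ) ^ n)⌉ ∧
    ∀ ℓ < 2 ^ n,
      i / 2 ^ n ≤ (bvec n i).getD ℓ 0 ∧
      ((bvec n i).getD ℓ 0 : ℤ) ≤ 1 + ⌈((i : ℚ) - 1) / ((2 : ℚ) ^ n)⌉ := by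
  obtain ⟨hlast, hhead, hbound⟩ := bvec_main n i
  have hk : (0:ℕ) < 2 ^ n := Nat.pow_pos (by norm_num)
  have hceil : (((i + 2 * 2 ^ n - 2) / 2 ^ n : ℕ) : ℤ)
      = 1 + ⌈((i : ℚ) - 1) / ((2 : ℚ) ^ n)⌉ := by
    have e1 : i + 2 * 2 ^ n - 2 = ((i - 1) + 2 ^ n - 1) + 2 ^ n := by omega
    rw [e1, Nat.add_div_right _ hk, Nat.cast_add, Nat.cast_one,
      ceil_eq (2 ^ n) (i - 1) hk]
    have h3 : ((i - 1 : ℕ) : ℚ) = (i : ℚ) - 1 := by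
      push_cast [Nat.cast_sub hi]; ring
    rw [h3]
    push_cast
    ring
  refine ⟨hlast, by rw [hhead, hceil], fun ℓ hℓ => ⟨(hbound ℓ hℓ).1, ?_⟩⟩
  rw [← hceil]
  exact_mod_cast (hbound ℓ hℓ).2
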